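/- Let V₁ and V₂ be nonzero finite-dimensional vector spaces over 𝔽₂ = ZMod 2, let E₁ ⊆ V₁ and E₂ ⊆ V₂ be finite subsets, and let v₁ ∈ E₁ and v₂ ∈ E₂ be nonzero vectors. Suppose that for k = 1, 2 there are n_k ≥ 2 pairwise distinct codimension-one subspaces of V_k such that every element of E_k lies in at least n_k − 2 of them. Let V = (V₁ × V₂)/⟨(v₁, v₂)⟩ and let E ⊆ V be the set of images of the vectors (x, 0) for x ∈ E₁ ∖ {v₁} together with the images of (0, y) for y ∈ E₂ ∖ {v₂}. Then there exist n₁ + n₂ − 2 pairwise distinct codimension-one subspaces of V such that every element of E lies in at least n₁ + n₂ − 4 of them. -/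

import Mathlib

attribute [local instance] Classical.propDecidable

open Module LinearMap Finset

private lemma zmod2_ne_zero {z : ZMod 2} (h : z ≠ 0) : z = 1 := by
  revert h; revert z; decide

private lemma zmod2_add_eq_zero {a b : ZMod 2} (h : a + b = 0) : a = b := by
  revert h; revert a b; decide

private lemma dual_eq_of_ker_eq {W : Type*} [AddCommGroup W] [Module (ZMod 2) W]
    {f g : W →ₗ[ZMod 2] ZMod 2} (hf : f ≠ 0)
    (h : LinearMap.ker f = LinearMap.ker g) : f = g := by
  obtain ⟨x₀, hx₀⟩ : ∃ x, f x ≠ 0 := by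
    by_contra hc
    push_neg at hc
    exact hf (LinearMap.ext fun x => hc x)
  have hgx₀ : g x₀ ≠ 0 := by
    intro h0
    exact hx₀ (by rw [← LinearMap.mem_ker, h, LinearMap.mem_ker]; exact h0)
  ext x
  have hmem : x + f x • x₀ ∈ LinearMap.ker f := by
    have hself : ∀ a : ZMod 2, a + a = 0 := by decide
    rw [LinearMap.mem_ker, map_add, map_smul, zmod2_ne_zero hx₀, smul_eq_mul, mul_one]
    exact hself _
  rw [h, LinearMap.mem_ker, map_add, map_smul, zmod2_ne_zero hgx₀, smul_eq_mul, mul_one] at hmem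
  exact (zmod2_add_eq_zero hmem).symm

private lemma exists_dual_of_hyperplane {W : Type*} [AddCommGroup W] [Module (ZMod 2) W]
    [FiniteDimensional (ZMod 2) W] {U : Submodule (ZMod 2) W}
    (h : finrank (ZMod 2) U + 1 = finrank (ZMod 2) W) :
    ∃ f : W →ₗ[ZMod 2] ZMod 2, f ≠ 0 ∧ LinearMap.ker f = U := by
  have hq : finrank (ZMod 2) (W ⧸ U) = 1 := by
    have := U.finrank_quotient_add_finrank
    omega
  have e : (W ⧸ U) ≃ₗ[ZMod 2] ZMod 2 :=
    LinearEquiv.ofFinrankEq _ _ (by rw [hq, finrank_self])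
  have hker : LinearMap.ker (e.toLinearMap ∘ₗ U.mkQ) = U := by
    rw [LinearMap.ker_comp, LinearEquiv.ker, Submodule.comap_bot, Submodule.ker_mkQ]
  refine ⟨_, ?_, hker⟩
  intro h0
  rw [h0, LinearMap.ker_zero] at hker
  rw [← hker, finrank_top] at h
  omega

private lemma finrank_ker_of_ne_zero {W : Type*} [AddCommGroup W] [Module (ZMod 2) W]
    [FiniteDimensional (ZMod 2) W] {f : W →ₗ[ZMod 2] ZMod 2} (hf : f ≠ 0) :
    finrank (ZMod 2) (LinearMap.ker f) + 1 = finrank (ZMod 2) W := by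
  have hr := f.finrank_range_add_finrank_ker
  obtain ⟨x₀, hx₀⟩ : ∃ x, f x ≠ 0 := by
    by_contra hc
    push_neg at hc
    exact hf (LinearMap.ext fun x => hc x)
  have hsurj : Function.Surjective f := by
    intro c
    refine ⟨c • x₀, ?_⟩
    rw [map_smul, zmod2_ne_zero hx₀, smul_eq_mul, mul_one]
  rw [LinearMap.range_eq_top_of_surjective f hsurj, finrank_top, finrank_self] at hr
  omega

/-- The `k = 2` case of Lemma 4.9 of the paper: if for `k = 1, 2` there are `n_k ≥ 2`
pairwise distinct codimension-one subspaces of `V_k` such that every element of `E_k` lies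
in at least `n_k − 2` of them, then the 2-sum at nonzero vectors `v₁ ∈ E₁`, `v₂ ∈ E₂`
admits `n₁ + n₂ − 2` pairwise distinct codimension-one subspaces such that every element
of the glued ground set lies in at least `n₁ + n₂ − 4` of them. -/
theorem two_sum_hyperplanes {V₁ V₂ : Type} [AddCommGroup V₁] [Module (ZMod 2) V₁]
    [AddCommGroup V₂] [Module (ZMod 2) V₂]
    [FiniteDimensional (ZMod 2) V₁] [FiniteDimensional (ZMod 2) V₂]
    [Nontrivial V₁] [Nontrivial V₂]
    (E₁ : Finset V₁) (E₂ : Finset V₂) (v₁ : V₁) (v₂ : V₂)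
    (hv₁E : v₁ ∈ E₁) (hv₂E : v₂ ∈ E₂) (hv₁ : v₁ ≠ 0) (hv₂ : v₂ ≠ 0)
    (n₁ n₂ : ℕ) (hn₁ : 2 ≤ n₁) (hn₂ : 2 ≤ n₂)
    (hU₁ : ∃ U : Fin n₁ → Submodule (ZMod 2) V₁, Function.Injective U ∧
      (∀ k, Module.finrank (ZMod 2) (U k) + 1 = Module.finrank (ZMod 2) V₁) ∧
      ∀ x ∈ E₁, n₁ ≤ (Finset.univ.filter fun k => x ∈ U k).card + 2)
    (hU₂ : ∃ U : Fin n₂ → Submodule (ZMod 2) V₂, Function.Injective U ∧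
      (∀ k, Module.finrank (ZMod 2) (U k) + 1 = Module.finrank (ZMod 2) V₂) ∧
      ∀ y ∈ E₂, n₂ ≤ (Finset.univ.filter fun k => y ∈ U k).card + 2)
    (E : Set ((V₁ × V₂) ⧸ Submodule.span (ZMod 2) ({(v₁, v₂)} : Set (V₁ × V₂))))
    (hE : E = (fun x : V₁ => Submodule.Quotient.mk ((x, 0) : V₁ × V₂)) '' (↑E₁ \ {v₁}) ∪
      (fun y : V₂ => Submodule.Quotient.mk ((0, y) : V₁ × V₂)) '' (↑E₂ \ {v₂})) :
    ∃ U : Fin (n₁ + n₂ - 2) → Submodule (ZMod 2)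
        ((V₁ × V₂) ⧸ Submodule.span (ZMod 2) ({(v₁, v₂)} : Set (V₁ × V₂))),
      Function.Injective U ∧
      (∀ k, Module.finrank (ZMod 2) (U k) + 1 =
        Module.finrank (ZMod 2)
          ((V₁ × V₂) ⧸ Submodule.span (ZMod 2) ({(v₁, v₂)} : Set (V₁ × V₂)))) ∧
      ∀ x ∈ E, n₁ + n₂ ≤ (Finset.univ.filter fun k => x ∈ U k).card + 4 := by
  obtain ⟨W₁, hW₁inj, hW₁rk, hW₁cov⟩ := hU₁
  obtain ⟨W₂, hW₂inj, hW₂rk, hW₂cov⟩ := hU₂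
  choose f hf using fun i => exists_dual_of_hyperplane (hW₁rk i)
  choose g hg using fun j => exists_dual_of_hyperplane (hW₂rk j)
  -- miss bounds
  have hmiss₁ : ∀ x ∈ E₁, (univ.filter fun i : Fin n₁ => f i x ≠ 0).card ≤ 2 := by
    intro x hx
    have h1 := hW₁cov x hx
    have h2 : (univ.filter fun i : Fin n₁ => x ∈ W₁ i).card
        + (univ.filter fun i : Fin n₁ => ¬ x ∈ W₁ i).card = n₁ := by
      rw [card_filter_add_card_filter_not, card_univ, Fintype.card_fin]
    have h3 : (univ.filter fun i : Fin n₁ => f i x ≠ 0)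
        = univ.filter fun i : Fin n₁ => ¬ x ∈ W₁ i := by
      apply filter_congr
      intro i _
      rw [← (hf i).2, LinearMap.mem_ker]
    rw [h3]
    omega
  have hmiss₂ : ∀ y ∈ E₂, (univ.filter fun j : Fin n₂ => g j y ≠ 0).card ≤ 2 := by
    intro y hy
    have h1 := hW₂cov y hy
    have h2 : (univ.filter fun j : Fin n₂ => y ∈ W₂ j).card
        + (univ.filter fun j : Fin n₂ => ¬ y ∈ W₂ j).card = n₂ := by
      rw [card_filter_add_card_filter_not, card_univ, Fintype.card_fin]
    have h3 : (univ.filter fun j : Fin n₂ => g j y ≠ 0)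
        = univ.filter fun j : Fin n₂ => ¬ y ∈ W₂ j := by
      apply filter_congr
      intro j _
      rw [← (hg j).2, LinearMap.mem_ker]
    rw [h3]
    omega
  set A : Finset (Fin n₁) := univ.filter (fun i => f i v₁ ≠ 0) with hA
  set B : Finset (Fin n₂) := univ.filter (fun j => g j v₂ ≠ 0) with hB
  have hAcard : A.card ≤ 2 := hmiss₁ v₁ hv₁E
  have hBcard : B.card ≤ 2 := hmiss₂ v₂ hv₂E
  have hAn : A.card ≤ n₁ := by
    have := card_filter_le (univ : Finset (Fin n₁)) (fun i => f i v₁ ≠ 0)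
    simpa [hA] using this
  have hBn : B.card ≤ n₂ := by
    have := card_filter_le (univ : Finset (Fin n₂)) (fun j => g j v₂ ≠ 0)
    simpa [hB] using this
  -- the pairing
  obtain ⟨P, hPA, hPcard⟩ := Finset.exists_subset_card_eq
    (s := A) (n := A.card + B.card - 2) (by omega)
  obtain ⟨Qb, hQB, hQcard⟩ := Finset.exists_subset_card_eq
    (s := B) (n := A.card + B.card - 2) (by omega)
  have ePQ : {i // i ∈ P} ≃ {j // j ∈ Qb} :=
    Fintype.equivOfCardEq (by rw [Fintype.card_coe, Fintype.card_coe, hPcard, hQcard])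
  set m : Fin n₁ → Fin n₂ :=
    fun i => if h : i ∈ P then (ePQ ⟨i, h⟩ : Fin n₂) else ⟨0, by omega⟩ with hm
  have hmB : ∀ i ∈ P, m i ∈ B := by
    intro i hi
    simp only [hm, dif_pos hi]
    exact hQB (ePQ ⟨i, hi⟩).2
  have hmP : ∀ i ∈ P, ∀ i' ∈ P, m i = m i' → i = i' := by
    intro i hi i' hi' hEq
    simp only [hm, dif_pos hi, dif_pos hi'] at hEq
    have := ePQ.injective (Subtype.ext hEq)
    exact congrArg Subtype.val this
  set p := Submodule.span (ZMod 2) ({(v₁, v₂)} : Set (V₁ × V₂)) with hp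
  -- the candidate functionals on V₁ × V₂
  set G : Fin n₁ → V₂ →ₗ[ZMod 2] ZMod 2 :=
    fun i => if i ∈ A then g (m i) else 0 with hG
  set d : Fin n₁ ⊕ Fin n₂ → (V₁ × V₂) →ₗ[ZMod 2] ZMod 2 :=
    Sum.elim (fun i => (f i).coprod (G i))
      (fun j => LinearMap.coprod (0 : V₁ →ₗ[ZMod 2] ZMod 2) (g j)) with hd
  set K : Finset (Fin n₁ ⊕ Fin n₂) :=
    ((univ.filter (fun i => i ∉ A)) ∪ P).map ⟨Sum.inl, Sum.inl_injective⟩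
      ∪ (univ.filter (fun j => j ∉ B)).map ⟨Sum.inr, Sum.inr_injective⟩ with hK
  have hKinl : ∀ i : Fin n₁, Sum.inl i ∈ K ↔ (i ∉ A ∨ i ∈ P) := by
    intro i; simp [hK]
  have hKinr : ∀ j : Fin n₂, Sum.inr j ∈ K ↔ j ∉ B := by
    intro j; simp [hK]
  have hKcard : n₁ + n₂ - 2 ≤ K.card := by
    have hd1 : Disjoint (univ.filter (fun i : Fin n₁ => i ∉ A)) P := by
      rw [Finset.disjoint_left]
      intro i hi hiP
      exact (Finset.mem_filter.mp hi).2 (hPA hiP)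
    have hd2 : Disjoint
        (((univ.filter (fun i : Fin n₁ => i ∉ A)) ∪ P).map ⟨Sum.inl, Sum.inl_injective⟩)
        ((univ.filter (fun j : Fin n₂ => j ∉ B)).map ⟨Sum.inr, Sum.inr_injective⟩) := by
      rw [Finset.disjoint_left]
      intro k hk1 hk2
      simp only [Finset.mem_map, Function.Embedding.coeFn_mk] at hk1 hk2
      obtain ⟨i, _, rfl⟩ := hk1
      obtain ⟨j, _, hj⟩ := hk2
      exact absurd hj (by simp)
    have h1 : A.card + (univ.filter (fun i : Fin n₁ => i ∉ A)).card = n₁ := by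
      have := card_filter_add_card_filter_not
        (s := (univ : Finset (Fin n₁))) (p := fun i => i ∈ A)
      rwa [Finset.filter_univ_mem, card_univ, Fintype.card_fin] at this
    have h2 : B.card + (univ.filter (fun j : Fin n₂ => j ∉ B)).card = n₂ := by
      have := card_filter_add_card_filter_not
        (s := (univ : Finset (Fin n₂))) (p := fun j => j ∈ B)
      rwa [Finset.filter_univ_mem, card_univ, Fintype.card_fin] at this
    rw [hK, Finset.card_union_of_disjoint hd2, Finset.card_map, Finset.card_map,
      Finset.card_union_of_disjoint hd1]
    omega
  have hdv : ∀ k ∈ K, d k (v₁, v₂) = 0 := by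
    intro k hk
    match k with
    | Sum.inl i =>
      rw [hKinl] at hk
      by_cases hiA : i ∈ A
      · have hiP : i ∈ P := hk.resolve_left (by simp [hiA])
        have h1 : f i v₁ = 1 := by
          apply zmod2_ne_zero
          have := hiA
          rw [hA, Finset.mem_filter] at this
          exact this.2
        have h2 : g (m i) v₂ = 1 := by
          apply zmod2_ne_zero
          have := hmB i hiP
          rw [hB, Finset.mem_filter] at this
          exact this.2
        have : d (Sum.inl i) (v₁, v₂) = f i v₁ + g (m i) v₂ := by
          simp [hd, hG, if_pos hiA]
        rw [this, h1, h2]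
        decide
      · have h1 : f i v₁ = 0 := by
          by_contra hne
          exact hiA (by rw [hA, Finset.mem_filter]; exact ⟨Finset.mem_univ i, hne⟩)
        simp [hd, hG, if_neg hiA, h1]
    | Sum.inr j =>
      rw [hKinr] at hk
      have h1 : g j v₂ = 0 := by
        by_contra hne
        exact hk (by rw [hB, Finset.mem_filter]; exact ⟨Finset.mem_univ j, hne⟩)
      simp [hd, h1]
  -- descend to the quotient
  set c : Fin n₁ ⊕ Fin n₂ → ((V₁ × V₂) ⧸ p) →ₗ[ZMod 2] ZMod 2 :=
    fun k => if hc : p ≤ LinearMap.ker (d k) then p.liftQ (d k) hc else 0 with hc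
  have hcmk : ∀ k ∈ K, ∀ w : V₁ × V₂, c k (Submodule.Quotient.mk w) = d k w := by
    intro k hk w
    have hle : p ≤ LinearMap.ker (d k) := by
      rw [hp, Submodule.span_le, Set.singleton_subset_iff, SetLike.mem_coe,
        LinearMap.mem_ker]
      exact hdv k hk
    simp only [hc, dif_pos hle]
    exact Submodule.liftQ_apply p (d k) w
  have hfex : ∀ i : Fin n₁, ∃ x, f i x ≠ 0 := by
    intro i
    by_contra hcon
    push_neg at hcon
    exact (hf i).1 (LinearMap.ext fun x => hcon x)
  have hgex : ∀ j : Fin n₂, ∃ y, g j y ≠ 0 := by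
    intro j
    by_contra hcon
    push_neg at hcon
    exact (hg j).1 (LinearMap.ext fun y => hcon y)
  have hcne : ∀ k ∈ K, c k ≠ 0 := by
    intro k hk h0
    cases k with
    | inl i =>
      obtain ⟨x, hx⟩ := hfex i
      have := hcmk (Sum.inl i) hk (x, 0)
      rw [h0] at this
      simp only [hd, LinearMap.zero_apply, Sum.elim_inl, LinearMap.coprod_apply,
        map_zero, add_zero] at this
      exact hx this.symm
    | inr j =>
      obtain ⟨y, hy⟩ := hgex j
      have := hcmk (Sum.inr j) hk (0, y)
      rw [h0] at this
      simp only [hd, LinearMap.zero_apply, Sum.elim_inr, LinearMap.coprod_apply,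
        map_zero, zero_add, LinearMap.zero_apply] at this
      exact hy this.symm
  -- select exactly n₁ + n₂ - 2 of them
  obtain ⟨K', hK'K, hK'card⟩ := Finset.exists_subset_card_eq hKcard
  have eK : {k // k ∈ K'} ≃ Fin (n₁ + n₂ - 2) :=
    Fintype.equivFinOfCardEq (by rw [Fintype.card_coe, hK'card])
  have hmemK : ∀ k : Fin (n₁ + n₂ - 2), (eK.symm k).1 ∈ K := fun k => hK'K (eK.symm k).2
  refine ⟨fun k => LinearMap.ker (c (eK.symm k).1), ?_, ?_, ?_⟩
  · -- injectivity
    intro k k' hkk'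
    have hceq : c (eK.symm k).1 = c (eK.symm k').1 :=
      dual_eq_of_ker_eq (hcne _ (hmemK k)) hkk'
    have hdeq : ∀ w, d (eK.symm k).1 w = d (eK.symm k').1 w := fun w => by
      rw [← hcmk _ (hmemK k) w, ← hcmk _ (hmemK k') w, hceq]
    have key : (eK.symm k).1 = (eK.symm k').1 := by
      rcases h1 : (eK.symm k).1 with i | j <;> rcases h2 : (eK.symm k').1 with i' | j'
      · -- inl, inl
        have hfe : f i = f i' := by
          ext x
          have := hdeq (x, 0)
          rw [h1, h2] at this
          simpa [hd, map_zero] using this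
        have : i = i' := hW₁inj (by rw [← (hf i).2, ← (hf i').2, hfe])
        rw [this]
      · exfalso
        have hfz : f i = 0 := by
          ext x
          have := hdeq (x, 0)
          rw [h1, h2] at this
          simpa [hd, map_zero] using this
        exact (hf i).1 hfz
      · exfalso
        have hfz : f i' = 0 := by
          ext x
          have := hdeq (x, 0)
          rw [h1, h2] at this
          simpa [hd, map_zero] using this.symm
        exact (hf i').1 hfz
      · have hge : g j = g j' := by
          ext y
          have := hdeq (0, y)
          rw [h1, h2] at this
          simpa [hd, map_zero] using this
        have : j = j' := hW₂inj (by rw [← (hg j).2, ← (hg j').2, hge])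
        rw [this]
    exact eK.symm.injective (Subtype.ext key)
  · -- hyperplanes
    intro k
    exact finrank_ker_of_ne_zero (hcne _ (hmemK k))
  · -- coverage
    intro x hx
    have hcomp : (univ.filter fun k : Fin (n₁ + n₂ - 2) =>
          x ∈ LinearMap.ker (c (eK.symm k).1)).card
        + (univ.filter fun k : Fin (n₁ + n₂ - 2) =>
          ¬ x ∈ LinearMap.ker (c (eK.symm k).1)).card = n₁ + n₂ - 2 := by
      rw [card_filter_add_card_filter_not, card_univ, Fintype.card_fin]
    suffices hle2 : (univ.filter fun k : Fin (n₁ + n₂ - 2) =>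
        ¬ x ∈ LinearMap.ker (c (eK.symm k).1)).card ≤ 2 by
      show n₁ + n₂ ≤ (univ.filter fun k : Fin (n₁ + n₂ - 2) =>
        x ∈ LinearMap.ker (c (eK.symm k).1)).card + 4
      omega
    rw [hE] at hx
    rcases hx with ⟨x₁, hx₁, rfl⟩ | ⟨y₂, hy₂, rfl⟩
    · -- left part
      have hx₁E : x₁ ∈ E₁ := by
        have := hx₁.1
        simpa using this
      have hform : ∀ k ∈ (univ.filter fun k : Fin (n₁ + n₂ - 2) =>
          ¬ (Submodule.Quotient.mk ((x₁, 0) : V₁ × V₂) : (V₁ × V₂) ⧸ p)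
            ∈ LinearMap.ker (c (eK.symm k).1)),
          ∃ i, (eK.symm k).1 = Sum.inl i ∧ f i x₁ ≠ 0 := by
        intro k hk
        rw [Finset.mem_filter] at hk
        have hne : d (eK.symm k).1 (x₁, 0) ≠ 0 := by
          intro h0
          exact hk.2 (by rw [LinearMap.mem_ker, hcmk _ (hmemK k), h0])
        rcases h1 : (eK.symm k).1 with i | j
        · refine ⟨i, rfl, ?_⟩
          rw [h1] at hne
          simpa [hd, map_zero] using hne
        · exfalso
          rw [h1] at hne
          simp [hd, map_zero] at hne
      calc (univ.filter fun k : Fin (n₁ + n₂ - 2) =>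
            ¬ (Submodule.Quotient.mk ((x₁, 0) : V₁ × V₂) : (V₁ × V₂) ⧸ p)
              ∈ LinearMap.ker (c (eK.symm k).1)).card
          ≤ (univ.filter fun i : Fin n₁ => f i x₁ ≠ 0).card := by
            apply Finset.card_le_card_of_injOn
              (fun k => Sum.elim (fun i => i) (fun _ => (⟨0, by omega⟩ : Fin n₁)) (eK.symm k).1)
            · intro k hk
              obtain ⟨i, hi, hfi⟩ := hform k hk
              beta_reduce
              rw [hi]
              simp only [Sum.elim_inl]
              exact Finset.mem_filter.mpr ⟨Finset.mem_univ i, hfi⟩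
            · intro k hk k' hk' hEq
              obtain ⟨i, hi, _⟩ := hform k (by simpa using hk)
              obtain ⟨i', hi', _⟩ := hform k' (by simpa using hk')
              simp only [] at hEq
              rw [hi, hi'] at hEq
              simp only [Sum.elim_inl] at hEq
              apply eK.symm.injective
              apply Subtype.ext
              rw [hi, hi', hEq]
        _ ≤ 2 := hmiss₁ x₁ hx₁E
    · -- right part
      have hy₂E : y₂ ∈ E₂ := by
        have := hy₂.1
        simpa using this
      have hform : ∀ k ∈ (univ.filter fun k : Fin (n₁ + n₂ - 2) =>
          ¬ (Submodule.Quotient.mk ((0, y₂) : V₁ × V₂) : (V₁ × V₂) ⧸ p)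
            ∈ LinearMap.ker (c (eK.symm k).1)),
          (∃ i, (eK.symm k).1 = Sum.inl i ∧ i ∈ P ∧ g (m i) y₂ ≠ 0) ∨
          (∃ j, (eK.symm k).1 = Sum.inr j ∧ j ∉ B ∧ g j y₂ ≠ 0) := by
        intro k hk
        rw [Finset.mem_filter] at hk
        have hne : d (eK.symm k).1 (0, y₂) ≠ 0 := by
          intro h0
          exact hk.2 (by rw [LinearMap.mem_ker, hcmk _ (hmemK k), h0])
        rcases h1 : (eK.symm k).1 with i | j
        · left
          rw [h1] at hne
          have hGne : G i y₂ ≠ 0 := by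
            simpa [hd, map_zero] using hne
          have hiA : i ∈ A := by
            by_contra hiA
            rw [hG] at hGne
            simp only [if_neg hiA, LinearMap.zero_apply] at hGne
            exact hGne rfl
          have hiP : i ∈ P := by
            have := hmemK k
            rw [h1, hKinl] at this
            exact this.resolve_left (by simp [hiA])
          refine ⟨i, rfl, hiP, ?_⟩
          rw [hG] at hGne
          simpa [if_pos hiA] using hGne
        · right
          rw [h1] at hne
          have hgj : g j y₂ ≠ 0 := by
            simpa [hd, map_zero] using hne
          have hjB : j ∉ B := by
            have := hmemK k
            rw [h1, hKinr] at this
            exact this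
          exact ⟨j, rfl, hjB, hgj⟩
      calc (univ.filter fun k : Fin (n₁ + n₂ - 2) =>
            ¬ (Submodule.Quotient.mk ((0, y₂) : V₁ × V₂) : (V₁ × V₂) ⧸ p)
              ∈ LinearMap.ker (c (eK.symm k).1)).card
          ≤ (univ.filter fun j : Fin n₂ => g j y₂ ≠ 0).card := by
            apply Finset.card_le_card_of_injOn
              (fun k => Sum.elim m (fun j => j) (eK.symm k).1)
            · intro k hk
              rcases hform k hk with ⟨i, hi, _, hgi⟩ | ⟨j, hj, _, hgj⟩
              · beta_reduce
                rw [hi]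
                simp only [Sum.elim_inl]
                exact Finset.mem_filter.mpr ⟨Finset.mem_univ _, hgi⟩
              · beta_reduce
                rw [hj]
                simp only [Sum.elim_inr]
                exact Finset.mem_filter.mpr ⟨Finset.mem_univ _, hgj⟩
            · intro k hk k' hk' hEq
              have hk2 := hform k (by simpa using hk)
              have hk2' := hform k' (by simpa using hk')
              simp only [] at hEq
              have key : (eK.symm k).1 = (eK.symm k').1 := by
                rcases hk2 with ⟨i, hi, hiP, _⟩ | ⟨j, hj, hjB, _⟩ <;>
                  rcases hk2' with ⟨i', hi', hiP', _⟩ | ⟨j', hj', hjB', _⟩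
                · rw [hi, hi'] at hEq ⊢
                  simp only [Sum.elim_inl] at hEq
                  rw [hmP i hiP i' hiP' hEq]
                · exfalso
                  rw [hi, hj'] at hEq
                  simp only [Sum.elim_inl, Sum.elim_inr] at hEq
                  exact hjB' (hEq ▸ hmB i hiP)
                · exfalso
                  rw [hj, hi'] at hEq
                  simp only [Sum.elim_inl, Sum.elim_inr] at hEq
                  apply hjB
                  rw [hEq]
                  exact hmB i' hiP'
                · rw [hj, hj'] at hEq ⊢
                  simp only [Sum.elim_inr] at hEq
                  rw [hEq]
              exact eK.symm.injective (Subtype.ext key)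
        _ ≤ 2 := hmiss₂ y₂ hy₂E
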